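/- Let χ_h := i^m γ^1⋯γ^n (n = 2m) be the Hodge grading on the exterior algebra. Then χ_h λ_±^p = λ_∓^p χ_h for all p; moreover, if B = (1/2) Σ T_{ijk}(λ_+^j λ_+^i λ_-^k + λ_+^k λ_-^i λ_-^j) anticommutes with χ_h, then Σ_j T_{ijj} = 0 for all i. -/

import Mathlib

open Matrix BigOperators

/-- Exterior multiplication by the basis vector `e^p` on the exterior algebra
`Λ(ℂ^n)`, realized as a matrix on the basis of `Λ(ℂ^n)` indexed by subsets of
`{1,...,n}`, with the standard sign `ε^I_{pJ}`. -/
noncomputable def lamP (n : ℕ) (p : Fin n) :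
    Matrix (Finset (Fin n)) (Finset (Fin n)) ℂ :=
  fun I J => if p ∉ J ∧ I = insert p J then (-1 : ℂ) ^ (J.filter (· < p)).card else 0

/-- The contraction (interior product) with `e_p`: the adjoint of `lamP n p`. -/
noncomputable def lamM (n : ℕ) (p : Fin n) :
    Matrix (Finset (Fin n)) (Finset (Fin n)) ℂ :=
  (lamP n p)ᴴ

/-- `γ^p = -i (λ_+^p - λ_-^p)`. -/
noncomputable def gam (n : ℕ) (p : Fin n) : Matrix (Finset (Fin n)) (Finset (Fin n)) ℂ :=
  (-Complex.I) • (lamP n p - lamM n p)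

/-- `γ̃^p = λ_+^p + λ_-^p`. -/
noncomputable def gamT (n : ℕ) (p : Fin n) : Matrix (Finset (Fin n)) (Finset (Fin n)) ℂ :=
  lamP n p + lamM n p

noncomputable def sgn (n : ℕ) (J : Finset (Fin n)) (p : Fin n) : ℂ :=
  (if p ∈ J then Complex.I else -Complex.I) * (-1) ^ (J.filter (· < p)).card

lemma gam_apply (n : ℕ) (p : Fin n) (I A : Finset (Fin n)) :
    gam n p I A = if I = symmDiff A {p} then sgn n A p else 0 := by
  by_cases hp : p ∈ A
  · have hsd : symmDiff A {p} = A.erase p := by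
      ext q
      rw [Finset.mem_symmDiff]
      simp only [Finset.mem_singleton, Finset.mem_erase]
      constructor
      · rintro (⟨h1, h2⟩ | ⟨h1, h2⟩)
        · exact ⟨h2, h1⟩
        · exact absurd (h1 ▸ hp) h2
      · rintro ⟨h1, h2⟩; exact Or.inl ⟨h2, h1⟩
    simp only [gam, lamM, Matrix.smul_apply, Matrix.sub_apply, Matrix.conjTranspose_apply,
      lamP, hp, not_true_eq_false, false_and, if_false, hsd, sgn, if_pos hp]
    by_cases hI : I = A.erase p
    · have hpI : p ∉ I := by rw [hI]; exact Finset.notMem_erase p A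
      have hins : A = insert p I := by rw [hI, Finset.insert_erase hp]
      rw [if_pos ⟨hpI, hins⟩, if_pos hI]
      have hfil : A.filter (· < p) = I.filter (· < p) := by
        rw [hins, Finset.filter_insert, if_neg (lt_irrefl p)]
      rw [hfil]
      simp only [star_pow, star_neg, star_one, smul_eq_mul, if_true]
      ring
    · rw [if_neg hI, if_neg]
      · simp
      · rintro ⟨h1, h2⟩
        exact hI (by rw [h2, Finset.erase_insert h1])
  · have hsd : symmDiff A {p} = insert p A := by
      ext q
      rw [Finset.mem_symmDiff]
      simp only [Finset.mem_singleton, Finset.mem_insert]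
      constructor
      · rintro (⟨h1, h2⟩ | ⟨h1, h2⟩)
        · exact Or.inr h1
        · exact Or.inl h1
      · rintro (h | h)
        · exact Or.inr ⟨h, h ▸ hp⟩
        · exact Or.inl ⟨h, fun hq => hp (hq ▸ h)⟩
    have hA : ¬ (p ∉ I ∧ A = insert p I) := by
      rintro ⟨h1, h2⟩; exact hp (h2 ▸ Finset.mem_insert_self p I)
    simp only [gam, lamM, Matrix.smul_apply, Matrix.sub_apply, Matrix.conjTranspose_apply,
      lamP, hA, if_false, hsd, sgn, if_neg hp, star_zero, sub_zero]
    by_cases hI : I = insert p A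
    · rw [if_pos ⟨hp, hI⟩, if_pos hI]
      simp only [smul_eq_mul]
    · rw [if_neg (fun hc => hI hc.2), if_neg hI]
      simp

lemma sgn_symmDiff {n : ℕ} (J S : Finset (Fin n)) (p : Fin n) (hS : ∀ q ∈ S, p < q) :
    sgn n (symmDiff J S) p = sgn n J p := by
  have hmem : (p ∈ symmDiff J S) ↔ (p ∈ J) := by
    rw [Finset.mem_symmDiff]
    constructor
    · rintro (⟨h, _⟩ | ⟨h, _⟩)
      · exact h
      · exact absurd (hS p h) (lt_irrefl p)
    · intro h
      exact Or.inl ⟨h, fun hp => lt_irrefl p (hS p hp)⟩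
  have hfil : (symmDiff J S).filter (· < p) = J.filter (· < p) := by
    ext q
    simp only [Finset.mem_filter, Finset.mem_symmDiff]
    constructor
    · rintro ⟨h | h, hq⟩
      · exact ⟨h.1, hq⟩
      · exact absurd (hS q h.1) (asymm hq)
    · intro ⟨h, hq⟩
      exact ⟨Or.inl ⟨h, fun hq' => asymm hq (hS q hq')⟩, hq⟩
  simp only [sgn, hfil, hmem]

lemma prod_gam_apply (n : ℕ) (l : List (Fin n)) (hl : l.Pairwise (· < ·)) (I J : Finset (Fin n)) :
    ((l.map (gam n)).prod) I J
      = if I = symmDiff J l.toFinset then (l.map (sgn n J)).prod else 0 := by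
  induction l generalizing I with
  | nil =>
    have hJ : symmDiff J (∅ : Finset (Fin n)) = J := by
      rw [← Finset.bot_eq_empty, symmDiff_bot]
    simp [Matrix.one_apply, hJ]
  | cons p t ih =>
    have hpw := List.pairwise_cons.mp hl
    have hpt : ∀ q ∈ t.toFinset, p < q := by
      intro q hq; exact hpw.1 q (List.mem_toFinset.mp hq)
    have hpS : p ∉ t.toFinset := fun hc => lt_irrefl p (hpt p hc)
    rw [List.map_cons, List.prod_cons, Matrix.mul_apply]
    simp only [ih hpw.2, mul_ite, mul_zero, Finset.sum_ite_eq', Finset.mem_univ, if_true]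
    rw [gam_apply]
    have hA : symmDiff (symmDiff J t.toFinset) {p} = symmDiff J (p :: t).toFinset := by
      rw [symmDiff_assoc, List.toFinset_cons]
      congr 1
      ext q
      rw [Finset.mem_symmDiff]
      simp only [Finset.mem_singleton, Finset.mem_insert]
      constructor
      · rintro (⟨h1, _⟩ | ⟨h1, _⟩)
        · exact Or.inr h1
        · exact Or.inl h1
      · rintro (h | h)
        · exact Or.inr ⟨h, h ▸ hpS⟩
        · exact Or.inl ⟨h, fun hq => hpS (hq ▸ h)⟩
    rw [hA, sgn_symmDiff J t.toFinset p hpt, List.map_cons, List.prod_cons, ite_mul, zero_mul]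

noncomputable def chi (m : ℕ) : Matrix (Finset (Fin (2*m))) (Finset (Fin (2*m))) ℂ :=
  Complex.I ^ m • ((List.finRange (2 * m)).map (gam (2 * m))).prod

noncomputable def sEnt (m : ℕ) (J : Finset (Fin (2*m))) : ℂ :=
  Complex.I ^ m * ∏ q, sgn (2*m) J q

lemma chi_apply (m : ℕ) (I J : Finset (Fin (2*m))) :
    chi m I J = if I = Jᶜ then sEnt m J else 0 := by
  rw [chi, Matrix.smul_apply,
    prod_gam_apply _ _ (List.pairwise_lt_finRange _), List.toFinset_finRange,
    ← Finset.top_eq_univ, symmDiff_top, hnot_eq_compl, smul_eq_mul, mul_ite, mul_zero, sEnt,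
    ← Fin.prod_univ_def]

lemma card_filter_lt_univ {n : ℕ} (q : Fin n) :
    (Finset.univ.filter (· < q)).card = (q : ℕ) := by
  have : (Finset.univ.filter (· < q)) = Finset.Iio q := by ext x; simp
  rw [this, Fin.card_Iio]

lemma card_filter_lt_add {n : ℕ} (J : Finset (Fin n)) (q : Fin n) :
    (J.filter (· < q)).card + (Jᶜ.filter (· < q)).card = (q : ℕ) := by
  have h1 : (Finset.univ.filter (· < q)).filter (· ∈ J) = J.filter (· < q) := by
    ext x; simp [and_comm]
  have h2 : (Finset.univ.filter (· < q)).filter (fun x => ¬ x ∈ J) = Jᶜ.filter (· < q) := by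
    ext x; simp [and_comm]
  rw [← h1, ← h2, Finset.card_filter_add_card_filter_not, card_filter_lt_univ]

lemma sgn_compl_mul {n : ℕ} (J : Finset (Fin n)) (q : Fin n) :
    sgn n Jᶜ q * sgn n J q = (-1 : ℂ) ^ (q : ℕ) := by
  have hc := card_filter_lt_add J q
  by_cases h : q ∈ J
  · simp only [sgn, h, if_true, Finset.mem_compl, not_true_eq_false, if_false, not_not]
    rw [← hc, pow_add]
    ring_nf
    rw [Complex.I_sq]
    ring
  · simp only [sgn, h, if_false, Finset.mem_compl, not_false_eq_true, if_true]
    rw [← hc, pow_add]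
    ring_nf
    rw [Complex.I_sq]
    ring

lemma sEnt_compl_mul (m : ℕ) (J : Finset (Fin (2*m))) : sEnt m Jᶜ * sEnt m J = 1 := by
  have hprod : (∏ q, sgn (2*m) Jᶜ q) * (∏ q, sgn (2*m) J q)
      = ∏ q : Fin (2*m), (-1 : ℂ) ^ (q : ℕ) := by
    rw [← Finset.prod_mul_distrib]
    exact Finset.prod_congr rfl fun q _ => sgn_compl_mul J q
  have hsum : ∏ q : Fin (2*m), (-1 : ℂ) ^ (q : ℕ) = (-1 : ℂ) ^ (∑ q : Fin (2*m), (q : ℕ)) := by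
    rw [Finset.prod_pow_eq_pow_sum]
  have hval : ∑ q : Fin (2*m), (q : ℕ) = m * (2 * m - 1) := by
    have h0 : ∑ q : Fin (2*m), (q : ℕ) = ∑ i ∈ Finset.range (2*m), i :=
      Fin.sum_univ_eq_sum_range (fun i => i) (2*m)
    have h1 := Finset.sum_range_id_mul_two (2*m)
    have h2 : m * (2 * m - 1) * 2 = 2 * m * (2 * m - 1) := by ring
    omega
  rw [sEnt, sEnt]
  have : Complex.I ^ m * (∏ q, sgn (2*m) Jᶜ q) * (Complex.I ^ m * ∏ q, sgn (2*m) J q)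
      = Complex.I ^ (2*m) * ((∏ q, sgn (2*m) Jᶜ q) * (∏ q, sgn (2*m) J q)) := by
    rw [show Complex.I ^ (2*m) = Complex.I ^ m * Complex.I ^ m by rw [two_mul, pow_add]]
    ring
  rw [this, hprod, hsum, hval]
  have h1 : Complex.I ^ (2*m) = (-1 : ℂ) ^ m := by
    rw [pow_mul, Complex.I_sq]
  rw [h1, ← pow_add]
  have h2 : m + m * (2 * m - 1) = 2 * (m * m) := by
    cases m with
    | zero => rfl
    | succ k =>
      have : 2 * (k + 1) - 1 = 2 * k + 1 := by omega
      rw [this]; ring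
  rw [h2, pow_mul]
  norm_num

lemma chi_mul_chi (m : ℕ) : chi m * chi m = 1 := by
  ext I J
  rw [Matrix.mul_apply, Matrix.one_apply]
  simp only [chi_apply, mul_ite, mul_zero, Finset.sum_ite_eq', Finset.mem_univ, if_true,
    compl_compl, ite_mul, zero_mul, sEnt_compl_mul]

lemma sgn_insert {n : ℕ} (J : Finset (Fin n)) (p : Fin n) (hp : p ∉ J) (q : Fin n) :
    sgn n (insert p J) q = (if p ≤ q then (-1:ℂ) else 1) * sgn n J q := by
  by_cases hq : q = p
  · subst hq
    have hfil : (insert q J).filter (· < q) = J.filter (· < q) := by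
      rw [Finset.filter_insert, if_neg (lt_irrefl q)]
    simp only [sgn, hfil, Finset.mem_insert_self, if_true, if_neg hp, if_pos (le_refl q)]
    ring
  · have hmem : (q ∈ insert p J) ↔ q ∈ J := by simp [Finset.mem_insert, hq]
    by_cases hlt : p < q
    · have hcard : ((insert p J).filter (· < q)).card = (J.filter (· < q)).card + 1 := by
        rw [Finset.filter_insert, if_pos hlt,
          Finset.card_insert_of_notMem (fun hc => hp (Finset.mem_filter.mp hc).1)]
      simp only [sgn, hmem, hcard, if_pos (le_of_lt hlt), pow_succ]
      ring
    · have hfil : (insert p J).filter (· < q) = J.filter (· < q) := by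
        rw [Finset.filter_insert, if_neg hlt]
      have hle : ¬ p ≤ q := fun hc => hlt (lt_of_le_of_ne hc (Ne.symm hq))
      simp only [sgn, hmem, hfil, if_neg hle, one_mul]

lemma prod_sgn_insert (m : ℕ) (J : Finset (Fin (2*m))) (p : Fin (2*m)) (hp : p ∉ J) :
    ∏ q, sgn (2*m) (insert p J) q = (-1:ℂ)^(p:ℕ) * ∏ q, sgn (2*m) J q := by
  rw [show ∏ q, sgn (2*m) (insert p J) q
      = ∏ q, ((if p ≤ q then (-1:ℂ) else 1) * sgn (2*m) J q) from
    Finset.prod_congr rfl fun q _ => sgn_insert J p hp q]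
  rw [Finset.prod_mul_distrib]
  congr 1
  rw [Finset.prod_ite, Finset.prod_const, Finset.prod_const, one_pow, mul_one]
  -- (-1) ^ (filter (p ≤ ·) univ).card = (-1)^p
  have hcard : (p : ℕ) + (Finset.univ.filter (fun q => p ≤ q)).card = 2 * m := by
    have hneg : (Finset.univ.filter (fun q : Fin (2*m) => ¬ q < p))
        = Finset.univ.filter (fun q => p ≤ q) := by
      ext x; simp [not_lt]
    have := Finset.card_filter_add_card_filter_not
      (s := (Finset.univ : Finset (Fin (2*m)))) (p := (· < p))
    rw [hneg] at this
    simp only [Finset.card_univ, Fintype.card_fin] at this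
    have h2 := card_filter_lt_univ p
    omega
  set e := (Finset.univ.filter (fun q : Fin (2*m) => p ≤ q)).card with he
  have h1 : ((-1:ℂ))^e * (-1)^(p:ℕ) = 1 := by
    rw [← pow_add, show e + (p:ℕ) = 2*m by omega, pow_mul]
    norm_num
  have h2 : ((-1:ℂ))^(p:ℕ) * (-1)^(p:ℕ) = 1 := by
    rw [← pow_add]
    exact Even.neg_one_pow ⟨p, rfl⟩
  calc ((-1:ℂ))^e = (-1)^e * ((-1)^(p:ℕ) * (-1)^(p:ℕ)) := by rw [h2, mul_one]
    _ = ((-1)^e * (-1)^(p:ℕ)) * (-1)^(p:ℕ) := by ring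
    _ = (-1)^(p:ℕ) := by rw [h1, one_mul]

lemma sEnt_insert (m : ℕ) (J : Finset (Fin (2*m))) (p : Fin (2*m)) (hp : p ∉ J) :
    sEnt m (insert p J) = (-1:ℂ)^(p:ℕ) * sEnt m J := by
  rw [sEnt, sEnt, prod_sgn_insert m J p hp]
  ring

lemma chi_mul_lamP (m : ℕ) (p : Fin (2*m)) :
    chi m * lamP (2*m) p = lamM (2*m) p * chi m := by
  ext I J
  rw [Matrix.mul_apply, Matrix.mul_apply]
  by_cases hpJ : p ∈ J
  · have hL : ∀ K ∈ Finset.univ, chi m I K * lamP (2*m) p K J = 0 := by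
      intro K _; simp [lamP, hpJ]
    rw [Finset.sum_congr rfl hL, Finset.sum_const_zero]
    by_cases hpI : p ∈ I
    · have hR : ∀ K ∈ Finset.univ, lamM (2*m) p I K * chi m K J = 0 := by
        intro K _; simp [lamM, Matrix.conjTranspose_apply, lamP, hpI]
      rw [Finset.sum_congr rfl hR, Finset.sum_const_zero]
    · have hR : ∀ K ∈ Finset.univ, lamM (2*m) p I K * chi m K J
          = if K = insert p I then ((-1:ℂ)^((I.filter (· < p)).card)) * chi m K J else 0 := by
        intro K _
        simp only [lamM, Matrix.conjTranspose_apply, lamP, hpI, not_false_eq_true, true_and]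
        by_cases hK : K = insert p I
        · rw [if_pos hK, if_pos hK]
          simp [star_pow]
        · rw [if_neg hK, if_neg hK, star_zero, zero_mul]
      rw [Finset.sum_congr rfl hR, Finset.sum_ite_eq']
      have hne : insert p I ≠ Jᶜ := fun hc =>
        (Finset.mem_compl.mp (hc ▸ Finset.mem_insert_self p I)) hpJ
      simp [chi_apply, hne]
  · -- p ∉ J
    have hL : ∀ K ∈ Finset.univ, chi m I K * lamP (2*m) p K J
        = if K = insert p J then chi m I K * ((-1:ℂ)^((J.filter (· < p)).card)) else 0 := by
      intro K _
      simp only [lamP, hpJ, not_false_eq_true, true_and, mul_ite, mul_zero]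
    rw [Finset.sum_congr rfl hL, Finset.sum_ite_eq', if_pos (Finset.mem_univ _)]
    by_cases hpI : p ∈ I
    · have hne : I ≠ (insert p J)ᶜ := fun hc => (Finset.mem_compl.mp (hc ▸ hpI))
        (Finset.mem_insert_self p J)
      have hR : ∀ K ∈ Finset.univ, lamM (2*m) p I K * chi m K J = 0 := by
        intro K _; simp [lamM, Matrix.conjTranspose_apply, lamP, hpI]
      rw [Finset.sum_congr rfl hR, Finset.sum_const_zero, chi_apply, if_neg hne, zero_mul]
    · have hR : ∀ K ∈ Finset.univ, lamM (2*m) p I K * chi m K J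
          = if K = insert p I then ((-1:ℂ)^((I.filter (· < p)).card)) * chi m K J else 0 := by
        intro K _
        simp only [lamM, Matrix.conjTranspose_apply, lamP, hpI, not_false_eq_true, true_and]
        by_cases hK : K = insert p I
        · rw [if_pos hK, if_pos hK]
          simp [star_pow]
        · rw [if_neg hK, if_neg hK, star_zero, zero_mul]
      rw [Finset.sum_congr rfl hR, Finset.sum_ite_eq', if_pos (Finset.mem_univ _)]
      rw [chi_apply, chi_apply]
      have hiff : (I = (insert p J)ᶜ) ↔ (insert p I = Jᶜ) := by
        rw [Finset.compl_insert]
        constructor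
        · rintro rfl
          exact Finset.insert_erase (Finset.mem_compl.mpr hpJ)
        · intro h
          rw [← h, Finset.erase_insert hpI]
      by_cases hc : I = (insert p J)ᶜ
      · rw [if_pos hc, if_pos (hiff.mp hc)]
        set a := (J.filter (· < p)).card with ha
        set b := (I.filter (· < p)).card with hb
        have hfilI : I.filter (· < p) = Jᶜ.filter (· < p) := by
          rw [hc, Finset.compl_insert]
          ext q
          simp only [Finset.mem_filter, Finset.mem_erase]
          constructor
          · rintro ⟨⟨_, h2⟩, h3⟩; exact ⟨h2, h3⟩
          · rintro ⟨h1, h2⟩; exact ⟨⟨ne_of_lt h2, h1⟩, h2⟩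
        have hab : a + b = (p : ℕ) := by
          rw [ha, hb, hfilI]; exact card_filter_lt_add J p
        rw [sEnt_insert m J p hpJ]
        have h2 : ((-1:ℂ))^a * (-1)^a = 1 := by
          rw [← pow_add]; exact Even.neg_one_pow ⟨a, rfl⟩
        have key : ((-1:ℂ))^(p:ℕ) * (-1)^a = (-1)^b := by
          rw [← hab, pow_add]
          calc (-1:ℂ)^a * (-1)^b * (-1)^a = ((-1)^a * (-1)^a) * (-1)^b := by ring
            _ = (-1)^b := by rw [h2, one_mul]
        calc (-1:ℂ)^(p:ℕ) * sEnt m J * (-1)^a = ((-1)^(p:ℕ) * (-1)^a) * sEnt m J := by ring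
          _ = (-1)^b * sEnt m J := by rw [key]
      · rw [if_neg hc, if_neg (fun h => hc (hiff.mpr h)), zero_mul, mul_zero]

lemma chi_mul_lamM (m : ℕ) (p : Fin (2*m)) :
    chi m * lamM (2*m) p = lamP (2*m) p * chi m := by
  have h1 := chi_mul_lamP m p
  have h2 := chi_mul_chi m
  calc chi m * lamM (2*m) p = chi m * (lamM (2*m) p * chi m * chi m) := by
        rw [mul_assoc (lamM (2*m) p), h2, mul_one]
    _ = chi m * (chi m * lamP (2*m) p * chi m) := by rw [h1]
    _ = chi m * chi m * (lamP (2*m) p * chi m) := by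
        rw [← mul_assoc, ← mul_assoc, mul_assoc (chi m * chi m)]
    _ = lamP (2*m) p * chi m := by rw [h2, one_mul]

lemma chi_term1 (m : ℕ) (i j k : Fin (2*m)) :
    chi m * (lamP (2*m) j * lamP (2*m) i * lamM (2*m) k)
      = lamM (2*m) j * lamM (2*m) i * lamP (2*m) k * chi m := by
  calc chi m * (lamP (2*m) j * lamP (2*m) i * lamM (2*m) k)
      = chi m * lamP (2*m) j * lamP (2*m) i * lamM (2*m) k := by
        rw [← mul_assoc, ← mul_assoc]
    _ = lamM (2*m) j * (chi m * lamP (2*m) i) * lamM (2*m) k := by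
        rw [chi_mul_lamP, mul_assoc (lamM (2*m) j)]
    _ = lamM (2*m) j * (lamM (2*m) i * chi m) * lamM (2*m) k := by rw [chi_mul_lamP]
    _ = lamM (2*m) j * lamM (2*m) i * (chi m * lamM (2*m) k) := by
        rw [← mul_assoc, mul_assoc _ (chi m), ← mul_assoc]
    _ = lamM (2*m) j * lamM (2*m) i * (lamP (2*m) k * chi m) := by rw [chi_mul_lamM]
    _ = lamM (2*m) j * lamM (2*m) i * lamP (2*m) k * chi m := by
        rw [← mul_assoc]

lemma chi_term2 (m : ℕ) (i j k : Fin (2*m)) :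
    chi m * (lamP (2*m) k * lamM (2*m) i * lamM (2*m) j)
      = lamM (2*m) k * lamP (2*m) i * lamP (2*m) j * chi m := by
  calc chi m * (lamP (2*m) k * lamM (2*m) i * lamM (2*m) j)
      = chi m * lamP (2*m) k * lamM (2*m) i * lamM (2*m) j := by
        rw [← mul_assoc, ← mul_assoc]
    _ = lamM (2*m) k * (chi m * lamM (2*m) i) * lamM (2*m) j := by
        rw [chi_mul_lamP, mul_assoc (lamM (2*m) k)]
    _ = lamM (2*m) k * (lamP (2*m) i * chi m) * lamM (2*m) j := by rw [chi_mul_lamM]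
    _ = lamM (2*m) k * lamP (2*m) i * (chi m * lamM (2*m) j) := by
        rw [← mul_assoc, mul_assoc _ (chi m), ← mul_assoc]
    _ = lamM (2*m) k * lamP (2*m) i * (lamP (2*m) j * chi m) := by rw [chi_mul_lamM]
    _ = lamM (2*m) k * lamP (2*m) i * lamP (2*m) j * chi m := by
        rw [← mul_assoc]

lemma lamP_col_empty (n : ℕ) (j : Fin n) (B : Finset (Fin n)) :
    lamP n j B ∅ = if B = {j} then 1 else 0 := by
  simp [lamP]

lemma lamM_col_empty (n : ℕ) (j : Fin n) (K : Finset (Fin n)) :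
    lamM n j K ∅ = 0 := by
  have h : ¬ (j ∉ K ∧ (∅ : Finset (Fin n)) = insert j K) :=
    fun hc => (Finset.insert_ne_empty j K) hc.2.symm
  simp [lamM, Matrix.conjTranspose_apply, lamP, h]

lemma entry_MMP (n : ℕ) (i j k : Fin n) (I : Finset (Fin n)) :
    (lamM n j * lamM n i * lamP n k) I ∅ = 0 := by
  rw [Matrix.mul_apply]
  apply Finset.sum_eq_zero
  intro B _
  rw [Matrix.mul_apply, Finset.sum_mul]
  apply Finset.sum_eq_zero
  intro K _
  by_cases hB : B = {k}
  · by_cases hK : i ∉ K ∧ ({k} : Finset (Fin n)) = insert i K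
    · have hKe : K = ∅ := by
        have hcard := congrArg Finset.card hK.2
        rw [Finset.card_singleton, Finset.card_insert_of_notMem hK.1] at hcard
        exact Finset.card_eq_zero.mp (by omega)
      rw [hKe, lamM_col_empty, zero_mul, zero_mul]
    · have : lamM n i K B = 0 := by
        rw [hB]
        simp only [lamM, Matrix.conjTranspose_apply, lamP, if_neg hK, star_zero]
      rw [this, mul_zero, zero_mul]
  · have : lamP n k B ∅ = 0 := by rw [lamP_col_empty, if_neg hB]
    rw [this, mul_zero]

lemma pair_eq {n : ℕ} (a b c d : Fin n) (hab : a ≠ b)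
    (h : insert a ({b} : Finset (Fin n)) = insert c {d}) :
    (c = a ∧ d = b) ∨ (c = b ∧ d = a) := by
  have hc : c ∈ insert a ({b} : Finset (Fin n)) := h ▸ Finset.mem_insert_self c {d}
  have hd : d ∈ insert a ({b} : Finset (Fin n)) := by
    rw [h]; exact Finset.mem_insert.mpr (Or.inr (Finset.mem_singleton_self d))
  have ha : a ∈ insert c ({d} : Finset (Fin n)) := h ▸ Finset.mem_insert_self a {b}
  have hb : b ∈ insert c ({d} : Finset (Fin n)) := by
    rw [← h]; exact Finset.mem_insert.mpr (Or.inr (Finset.mem_singleton_self b))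
  simp only [Finset.mem_insert, Finset.mem_singleton] at hc hd ha hb
  rcases hc with rfl | rfl <;> rcases hd with rfl | rfl <;> tauto

lemma entry_MPP (n : ℕ) (p i j k : Fin n) :
    (lamM n k * lamP n i * lamP n j) {p} ∅
      = (if i = k ∧ j = p then 1 else 0) - (if i = p ∧ j = k then 1 else 0) := by
  rw [Matrix.mul_apply]
  have h1 : ∀ B ∈ Finset.univ, (lamM n k * lamP n i) {p} B * lamP n j B ∅
      = if B = {j} then (lamM n k * lamP n i) {p} B * 1 else 0 := by
    intro B _; rw [lamP_col_empty, mul_ite, mul_zero]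
  rw [Finset.sum_congr rfl h1, Finset.sum_ite_eq', if_pos (Finset.mem_univ _), mul_one,
    Matrix.mul_apply]
  by_cases hkp : k = p
  · subst hkp
    have hz : ∀ K ∈ Finset.univ, lamM n k {k} K * lamP n i K {j} = 0 := by
      intro K _
      simp [lamM, Matrix.conjTranspose_apply, lamP]
    rw [Finset.sum_congr rfl hz, Finset.sum_const_zero, sub_self]
  · have hk : k ∉ ({p} : Finset (Fin n)) := by simp [hkp]
    have hstep : ∀ K ∈ Finset.univ, lamM n k {p} K * lamP n i K {j}
        = if K = insert k {p} then
            ((-1:ℂ)^((({p} : Finset (Fin n)).filter (· < k)).card)) * lamP n i K {j} else 0 := by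
      intro K _
      simp only [lamM, Matrix.conjTranspose_apply, lamP]
      by_cases hK : K = insert k {p}
      · rw [if_pos ⟨hk, hK⟩, if_pos hK]
        simp only [star_pow, star_neg, star_one]
      · rw [if_neg (fun hc => hK hc.2), if_neg hK, star_zero, zero_mul]
    rw [Finset.sum_congr rfl hstep, Finset.sum_ite_eq', if_pos (Finset.mem_univ _)]
    have hcardp : ((({p} : Finset (Fin n)).filter (· < k)).card) = if p < k then 1 else 0 := by
      rw [Finset.filter_singleton]
      split <;> simp
    by_cases hC1 : i = k ∧ j = p
    · obtain ⟨rfl, rfl⟩ := hC1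
      have hC2f : ¬ (i = j ∧ j = i) := fun hc => hkp (hc.1.symm ▸ rfl)
      rw [if_pos ⟨rfl, rfl⟩, if_neg hC2f, sub_zero]
      simp only [lamP]
      rw [if_pos (show i ∉ ({j} : Finset (Fin n)) ∧ True from ⟨hk, trivial⟩), ← pow_add]
      exact Even.neg_one_pow ⟨_, rfl⟩
    · by_cases hC2 : i = p ∧ j = k
      · obtain ⟨rfl, rfl⟩ := hC2
        rw [if_neg hC1, if_pos ⟨rfl, rfl⟩, zero_sub]
        have hij : i ≠ j := fun h => hkp h.symm
        simp only [lamP]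
        rw [if_pos (show i ∉ ({j} : Finset (Fin n)) ∧
            ({j, i} : Finset (Fin n)) = insert i {j} from
          ⟨by simp [hij], Finset.pair_comm j i⟩)]
        simp only [Finset.filter_singleton]
        rcases lt_or_gt_of_ne hij with h | h
        · rw [if_neg (asymm h), if_pos h]
          norm_num
        · rw [if_pos h, if_neg (asymm h)]
          norm_num
      · rw [if_neg hC1, if_neg hC2, sub_self]
        simp only [lamP]
        rw [if_neg (show ¬ (i ∉ ({j} : Finset (Fin n)) ∧
            ({k, p} : Finset (Fin n)) = insert i {j}) by
          rintro ⟨_, hc⟩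
          rcases pair_eq k p i j hkp hc with h | h
          · exact hC1 h
          · exact hC2 h), mul_zero]

noncomputable def Bmat (m : ℕ) (T : Fin (2 * m) → Fin (2 * m) → Fin (2 * m) → ℝ) :
    Matrix (Finset (Fin (2*m))) (Finset (Fin (2*m))) ℂ :=
  (1 / 2 : ℂ) • ∑ i, ∑ j, ∑ k, (T i j k : ℂ) •
    (lamP (2 * m) j * lamP (2 * m) i * lamM (2 * m) k
      + lamP (2 * m) k * lamM (2 * m) i * lamM (2 * m) j)

noncomputable def Bmat' (m : ℕ) (T : Fin (2 * m) → Fin (2 * m) → Fin (2 * m) → ℝ) :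
    Matrix (Finset (Fin (2*m))) (Finset (Fin (2*m))) ℂ :=
  (1 / 2 : ℂ) • ∑ i, ∑ j, ∑ k, (T i j k : ℂ) •
    (lamM (2 * m) j * lamM (2 * m) i * lamP (2 * m) k
      + lamM (2 * m) k * lamP (2 * m) i * lamP (2 * m) j)

lemma chi_mul_B (m : ℕ) (T : Fin (2 * m) → Fin (2 * m) → Fin (2 * m) → ℝ) :
    chi m * Bmat m T = Bmat' m T * chi m := by
  rw [Bmat, Bmat', Matrix.mul_smul, Matrix.smul_mul]
  congr 1
  rw [Matrix.mul_sum, Matrix.sum_mul]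
  refine Finset.sum_congr rfl fun i _ => ?_
  rw [Matrix.mul_sum, Matrix.sum_mul]
  refine Finset.sum_congr rfl fun j _ => ?_
  rw [Matrix.mul_sum, Matrix.sum_mul]
  refine Finset.sum_congr rfl fun k _ => ?_
  rw [Matrix.mul_smul, Matrix.smul_mul]
  congr 1
  rw [Matrix.mul_add, Matrix.add_mul, chi_term1, chi_term2]

lemma B_plus_B' (m : ℕ) (T : Fin (2 * m) → Fin (2 * m) → Fin (2 * m) → ℝ)
    (h : chi m * Bmat m T + Bmat m T * chi m = 0) :
    Bmat' m T + Bmat m T = 0 := by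
  have h0 : (Bmat' m T + Bmat m T) * chi m = 0 := by
    rw [Matrix.add_mul, ← chi_mul_B]; exact h
  have h1 := congrArg (fun M => M * chi m) h0
  simpa [mul_assoc, chi_mul_chi, Matrix.zero_mul] using h1

lemma mul_lamM_col (n : ℕ) (A : Matrix (Finset (Fin n)) (Finset (Fin n)) ℂ) (j : Fin n)
    (I : Finset (Fin n)) : (A * lamM n j) I ∅ = 0 := by
  rw [Matrix.mul_apply]
  exact Finset.sum_eq_zero fun K _ => by rw [lamM_col_empty, mul_zero]

lemma Bmat_col (m : ℕ) (T : Fin (2 * m) → Fin (2 * m) → Fin (2 * m) → ℝ)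
    (I : Finset (Fin (2*m))) : Bmat m T I ∅ = 0 := by
  rw [Bmat, Matrix.smul_apply]
  simp only [Matrix.sum_apply, Matrix.smul_apply, Matrix.add_apply, mul_lamM_col]
  simp

lemma triple_sum (N : ℕ) (f : Fin N → Fin N → Fin N → ℂ) (p : Fin N) :
    (∑ i, ∑ j, ∑ k, f i j k *
        ((if i = k ∧ j = p then (1:ℂ) else 0) - (if i = p ∧ j = k then 1 else 0)))
      = (∑ i, f i p i) - (∑ j, f p j j) := by
  have h1 : ∀ i j : Fin N, (∑ k, f i j k * (if i = k ∧ j = p then (1:ℂ) else 0))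
      = if j = p then f i j i else 0 := by
    intro i j
    by_cases hjp : j = p
    · rw [Finset.sum_eq_single i]
      · simp [hjp]
      · intro k _ hk
        simp [show ¬ (i = k) from fun hc => hk hc.symm]
      · intro hc; exact absurd (Finset.mem_univ i) hc
    · rw [if_neg hjp]
      exact Finset.sum_eq_zero fun k _ => by simp [hjp]
  have h2 : ∀ i j : Fin N, (∑ k, f i j k * (if i = p ∧ j = k then (1:ℂ) else 0))
      = if i = p then f i j j else 0 := by
    intro i j
    by_cases hip : i = p
    · rw [Finset.sum_eq_single j]
      · simp [hip]
      · intro k _ hk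
        simp [show ¬ (j = k) from fun hc => hk hc.symm]
      · intro hc; exact absurd (Finset.mem_univ j) hc
    · rw [if_neg hip]
      exact Finset.sum_eq_zero fun k _ => by simp [hip]
  simp only [mul_sub, Finset.sum_sub_distrib, h1, h2]
  congr 1
  · exact Finset.sum_congr rfl fun i _ => Finset.sum_ite_eq' Finset.univ p (fun j => f i j i)
      |>.trans (if_pos (Finset.mem_univ p))
  · rw [Finset.sum_congr rfl fun i (_ : i ∈ Finset.univ) =>
      (Finset.sum_ite_irrel (i = p) Finset.univ (fun j => f i j j) (fun _ => 0)).trans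
        (by rw [Finset.sum_const_zero]),
      Finset.sum_ite_eq' Finset.univ p (fun i => ∑ j, f i j j)]
    simp

lemma Bmat'_col (m : ℕ) (T : Fin (2 * m) → Fin (2 * m) → Fin (2 * m) → ℝ) (p : Fin (2*m)) :
    Bmat' m T {p} ∅ = (1/2:ℂ) * ((∑ i, (T i p i : ℂ)) - (∑ j, (T p j j : ℂ))) := by
  rw [Bmat', Matrix.smul_apply, smul_eq_mul]
  congr 1
  simp only [Matrix.sum_apply, Matrix.smul_apply, Matrix.add_apply, entry_MMP, entry_MPP,
    zero_add, smul_eq_mul]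
  exact triple_sum (2*m) (fun i j k => (T i j k : ℂ)) p

theorem stmt11 (m : ℕ) (T : Fin (2 * m) → Fin (2 * m) → Fin (2 * m) → ℝ)
    (hT : ∀ i j k, T i j k = -T j i k) :
    (∀ p, (Complex.I ^ m • ((List.finRange (2 * m)).map (gam (2 * m))).prod) * lamP (2 * m) p
        = lamM (2 * m) p * (Complex.I ^ m • ((List.finRange (2 * m)).map (gam (2 * m))).prod) ∧
      (Complex.I ^ m • ((List.finRange (2 * m)).map (gam (2 * m))).prod) * lamM (2 * m) p
        = lamP (2 * m) p * (Complex.I ^ m • ((List.finRange (2 * m)).map (gam (2 * m))).prod)) ∧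
    (((Complex.I ^ m • ((List.finRange (2 * m)).map (gam (2 * m))).prod) *
        ((1 / 2 : ℂ) • ∑ i, ∑ j, ∑ k, (T i j k : ℂ) •
          (lamP (2 * m) j * lamP (2 * m) i * lamM (2 * m) k
            + lamP (2 * m) k * lamM (2 * m) i * lamM (2 * m) j)) +
      ((1 / 2 : ℂ) • ∑ i, ∑ j, ∑ k, (T i j k : ℂ) •
          (lamP (2 * m) j * lamP (2 * m) i * lamM (2 * m) k
            + lamP (2 * m) k * lamM (2 * m) i * lamM (2 * m) j)) *
        (Complex.I ^ m • ((List.finRange (2 * m)).map (gam (2 * m))).prod) = 0) →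
      ∀ i, ∑ j, T i j j = 0) := by
  refine ⟨fun p => ⟨chi_mul_lamP m p, chi_mul_lamM m p⟩, fun h p => ?_⟩
  have h' : chi m * Bmat m T + Bmat m T * chi m = 0 := h
  have hBB := B_plus_B' m T h'
  have hE := congrFun (congrFun hBB {p}) ∅
  rw [Matrix.add_apply, Matrix.zero_apply, Bmat_col, add_zero, Bmat'_col] at hE
  have hswap : (∑ i, (T i p i : ℂ)) = - ∑ j, (T p j j : ℂ) := by
    rw [← Finset.sum_neg_distrib]
    exact Finset.sum_congr rfl fun i _ => by rw [hT i p i]; push_cast; ring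
  rw [hswap] at hE
  have hS : (∑ j, (T p j j : ℂ)) = 0 := by linear_combination (-1 : ℂ) * hE
  have hfin : ((∑ j, T p j j : ℝ) : ℂ) = 0 := by push_cast; exact hS
  exact_mod_cast hfin
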